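/- There exist a symmetrical preference profile on 3 voters, a best-response permutation dynamics on it, starting from the delegation function where every voter votes, that reaches a Nash-stable delegation function only at the end of the third round and not earlier; hence the bound of 3 rounds in the convergence theorem for symmetrical profiles is tight. In particular, one may take a profile where voter 1 prefers 2 then herself, voter 3 prefers 2 then herself, voter 2 prefers 1, then 3, then herself, with token order 1,2,3, 2,3,1, 1,3,2. -/

import Mathlib

namespace LD

variable {V : Type*}

/-- Alternatives: `none` is abstention (0), `some j` means voter `j`. -/
abbrev Alt (V : Type*) := Option V

/-- A preference profile: each voter has a strict linear (total) order on alternatives. -/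
def IsProfile (pref : V → Option V → Option V → Prop) : Prop :=
  ∀ i : V, IsStrictTotalOrder (Option V) (pref i)

/-- Voter `i` is an abstainer if she prefers abstention to voting. -/
def Abstainer (pref : V → Option V → Option V → Prop) (i : V) : Prop :=
  pref i none (some i)

/-- `j ∈ Acc i`: voter `i` accepts `j` as a guru. -/
def Acc (pref : V → Option V → Option V → Prop) (i j : V) : Prop :=
  j ≠ i ∧ pref i (some j) (some i) ∧ pref i (some j) none

/-- Gurus of a delegation function: voters who vote themselves. -/
def Gurus (d : V → Option V) : Set V := {i | d i = some i}

/-- `K` is a kernel of the digraph with vertex set `S` and arc relation `A`: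
independent and absorbing. -/
def Kernel (S : Set V) (A : V → V → Prop) (K : Set V) : Prop :=
  K ⊆ S ∧ (∀ i ∈ K, ∀ j ∈ K, ¬ A i j) ∧ ∀ u ∈ S, u ∉ K → ∃ k ∈ K, A u k

variable [DecidableEq V] [Fintype V]

/-- Fuel-based iteration of the delegation function. -/
def guIter (d : V → Option V) : ℕ → V → Option V
  | 0, _ => none
  | k + 1, i =>
    match d i with
    | none => none
    | some j => if j = i then some i else guIter d k j

/-- The guru of voter `i`: the voter reached from `i` by following delegations
(`none`, i.e. abstention, if the delegations from `i` abstain or enter a cycle). -/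
def gu (d : V → Option V) (i : V) : Option V :=
  guIter d (Fintype.card V + 1) i

/-- Nash-stability of a delegation function. -/
def NashStable (pref : V → Option V → Option V → Prop) (d : V → Option V) : Prop :=
  ∀ i : V, ∀ g : Option V,
    ((∃ j ∈ Gurus d, g = some j) ∨ g = none ∨ g = some i) →
    g ≠ gu d i → pref i (gu d i) g

end LD

namespace LD

variable {V : Type*} [DecidableEq V] [Fintype V]

/-- `dnext` is obtained from `dprev` by a *best response* of voter `i`:
only `i`'s delegation may change, the resulting guru of `i` is (weakly) her most
preferred among all outcomes achievable by changing her own delegation, and if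
her current outcome is already best she does not change her delegation
(so that a best response is also an improved response). -/
def BestResponse (pref : V → Option V → Option V → Prop)
    (dprev : V → Option V) (i : V) (dnext : V → Option V) : Prop :=
  (∀ j : V, j ≠ i → dnext j = dprev j) ∧
  (∀ c : Option V,
      gu (Function.update dprev i c) i ≠ gu dnext i →
      pref i (gu dnext i) (gu (Function.update dprev i c) i)) ∧
  (gu dnext i = gu dprev i → dnext i = dprev i)

/-- `dnext` is obtained from `dprev` by an *improved response* of voter `i`:
only `i`'s delegation may change, and either her outcome strictly improves, or
no strictly improving move exists and she keeps her delegation unchanged. -/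
def ImprovedResponse (pref : V → Option V → Option V → Prop)
    (dprev : V → Option V) (i : V) (dnext : V → Option V) : Prop :=
  (∀ j : V, j ≠ i → dnext j = dprev j) ∧
  (pref i (gu dnext i) (gu dprev i) ∨
    (dnext i = dprev i ∧
      ∀ c : Option V, ¬ pref i (gu (Function.update dprev i c) i) (gu dprev i)))

/-- Every voter receives the token at least once during the steps `a,…,b`. -/
def Covers (T : ℕ → V) (a b : ℕ) : Prop :=
  ∀ i : V, ∃ t : ℕ, a ≤ t ∧ t ≤ b ∧ T t = i

/-- Every voter receives the token infinitely many times. -/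
def InfOften (T : ℕ → V) : Prop :=
  ∀ i : V, ∀ t : ℕ, ∃ t' : ℕ, t < t' ∧ T t' = i

end LD

namespace LDTight

open LD

/-- Rank function: lower rank = more preferred. -/
def rnk (i : Fin 3) (o : Option (Fin 3)) : ℕ :=
  o.elim ((![2, 3, 2] : Fin 3 → ℕ) i)
    (fun j => (![![1, 0, 3], ![0, 2, 1], ![3, 0, 1]] : Fin 3 → Fin 3 → ℕ) i j)

def pref (i : Fin 3) (a b : Option (Fin 3)) : Prop := rnk i a < rnk i b

instance (i : Fin 3) (a b : Option (Fin 3)) : Decidable (pref i a b) :=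
  inferInstanceAs (Decidable (_ < _))

instance (i j : Fin 3) : Decidable (LD.Acc pref i j) := by
  unfold LD.Acc; infer_instance

instance (dp : Fin 3 → Option (Fin 3)) (i : Fin 3) (dn : Fin 3 → Option (Fin 3)) :
    Decidable (BestResponse pref dp i dn) := by
  unfold BestResponse; infer_instance

instance (dd : Fin 3 → Option (Fin 3)) : Decidable (NashStable pref dd) :=
  decidable_of_iff
    (∀ i : Fin 3, ∀ g : Option (Fin 3),
      ((∃ j, dd j = some j ∧ g = some j) ∨ g = none ∨ g = some i) →
      g ≠ gu dd i → pref i (gu dd i) g) Iff.rfl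

theorem isProfile : IsProfile pref := by
  have h1 : ∀ i (a b : Option (Fin 3)), pref i a b ∨ a = b ∨ pref i b a := by decide
  have h2 : ∀ i (a : Option (Fin 3)), ¬ pref i a a := by decide
  have h3 : ∀ i (a b c : Option (Fin 3)), pref i a b → pref i b c → pref i a c := by decide
  intro i
  exact { trichotomous := fun a b hab hba => ((h1 i a b).resolve_left hab).resolve_right hba, irrefl := h2 i, trans := fun a b c => h3 i a b c }

def dA : Fin 3 → Option (Fin 3) := fun i => some i
def dB : Fin 3 → Option (Fin 3) := ![some 1, some 1, some 2]
def dC : Fin 3 → Option (Fin 3) := ![some 1, some 2, some 2]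
def dD : Fin 3 → Option (Fin 3) := ![some 0, some 2, some 2]
def dE : Fin 3 → Option (Fin 3) := ![some 0, some 0, some 2]

def T (t : ℕ) : Fin 3 :=
  (![1, 0, 1, 2, 1, 2, 0, 0, 2] : Fin 9 → Fin 3) ⟨t % 9, Nat.mod_lt _ (by norm_num)⟩

theorem T_congr {a b : ℕ} (h : a % 9 = b % 9) : T a = T b := by
  unfold T; congr 1; exact Fin.ext h

def d (t : ℕ) : Fin 3 → Option (Fin 3) :=
  if t = 0 then dA else if t = 1 then dB else if t ≤ 5 then dC else if t ≤ 8 then dD else dE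

theorem d_ge (t : ℕ) (h : 9 ≤ t) : d t = dE := by
  unfold d
  rw [if_neg (by omega), if_neg (by omega), if_neg (by omega), if_neg (by omega)]

theorem brE : ∀ i : Fin 3, BestResponse pref dE i dE := by decide

end LDTight

open LD in
/-- the 3-round bound for BRD on symmetrical profiles is tight.
There exist a symmetrical preference profile on 3 voters — one may take
`Acc 0 = {1}`, `Acc 2 = {1}`, `Acc 1 = {0, 2}` with voter `1` preferring `0` to
`2` and every voter preferring to vote rather than to abstain (voters `1,2,3`
of the paper are `0,1,2` here) — and a best-response dynamics on it, starting
from the delegation function in which every voter votes, whose token function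
gives the token to each voter exactly once in each of the blocks `[1,3]`,
`[4,6]`, `[7,9]` (so that the rounds end at steps `3`, `6` and `9`), such that
the delegation function reached at the end of the third round (step `9`) is
Nash-stable while none of the earlier delegation functions is. -/
theorem symmetric_brd_three_rounds_tight :
    ∃ pref : Fin 3 → Option (Fin 3) → Option (Fin 3) → Prop,
      IsProfile pref ∧
      (∀ i j : Fin 3, Acc pref i j ↔ Acc pref j i) ∧
      (∀ j : Fin 3,
        (Acc pref 0 j ↔ j = 1) ∧ (Acc pref 2 j ↔ j = 1) ∧
        (Acc pref 1 j ↔ (j = 0 ∨ j = 2))) ∧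
      pref 1 (some 0) (some 2) ∧
      (∀ i : Fin 3, pref i (some i) none) ∧
      ∃ T : ℕ → Fin 3, InfOften T ∧
        (∀ k : ℕ, k < 3 → Covers T (3 * k + 1) (3 * k + 3)) ∧
        ∃ d : ℕ → Fin 3 → Option (Fin 3),
          (∀ i : Fin 3, d 0 i = some i) ∧
          (∀ t : ℕ, BestResponse pref (d t) (T (t + 1)) (d (t + 1))) ∧
          NashStable pref (d 9) ∧ (∀ t : ℕ, t < 9 → ¬ NashStable pref (d t)) := by
  refine ⟨LDTight.pref, LDTight.isProfile, by decide, by decide, by decide, by decide,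
    LDTight.T, ?_, ?_, LDTight.d, fun i => rfl, ?_, ?_, ?_⟩
  · -- InfOften
    intro i t
    fin_cases i
    · exact ⟨9 * (t + 1) + 1, by omega,
        by rw [LDTight.T_congr (show (9 * (t + 1) + 1) % 9 = 1 % 9 by omega)]; decide⟩
    · exact ⟨9 * (t + 1), by omega,
        by rw [LDTight.T_congr (show (9 * (t + 1)) % 9 = 0 % 9 by omega)]; decide⟩
    · exact ⟨9 * (t + 1) + 3, by omega,
        by rw [LDTight.T_congr (show (9 * (t + 1) + 3) % 9 = 3 % 9 by omega)]; decide⟩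
  · -- Covers
    intro k hk
    interval_cases k <;> intro i <;> fin_cases i
    · exact ⟨1, by norm_num, by norm_num, by decide⟩
    · exact ⟨2, by norm_num, by norm_num, by decide⟩
    · exact ⟨3, by norm_num, by norm_num, by decide⟩
    · exact ⟨6, by norm_num, by norm_num, by decide⟩
    · exact ⟨4, by norm_num, by norm_num, by decide⟩
    · exact ⟨5, by norm_num, by norm_num, by decide⟩
    · exact ⟨7, by norm_num, by norm_num, by decide⟩
    · exact ⟨9, by norm_num, by norm_num, by decide⟩
    · exact ⟨8, by norm_num, by norm_num, by decide⟩
  · -- Best responses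
    intro t
    by_cases h : t < 9
    · interval_cases t <;> decide
    · rw [LDTight.d_ge t (by omega), LDTight.d_ge (t + 1) (by omega)]
      exact LDTight.brE _
  · -- NashStable at step 9
    rw [LDTight.d_ge 9 le_rfl]
    decide
  · -- not stable before
    intro t ht
    interval_cases t <;> decide
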